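/- Let k be an algebraically closed field of characteristic 3, write k(x) for the field of rational functions over k, and let k(x³) ⊆ k(x) denote the range of the k-algebra endomorphism of k(x) sending x to x³. Let g, h ∈ k(x) be nonzero and suppose there is no β ∈ k(x³) with g = β·h. Then for q, r ∈ k(x), one has q·g′ − g·q′ = r·h′ − h·r′ if and only if there exist β, γ, δ ∈ k(x³) such that q = β·h + γ·g and r = −β·g + δ·h. -/

import Mathlib

open Polynomial

section Aux
variable {k : Type*} [Field k] [CharP k 3]

lemma three_eq_zero' : (3 : RatFunc k) = 0 := by
  have : CharP (RatFunc k) 3 :=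
    charP_of_injective_algebraMap (algebraMap k (RatFunc k)).injective 3
  exact_mod_cast CharP.cast_eq_zero (RatFunc k) 3

lemma D_algebraMap (D : Derivation k (RatFunc k) (RatFunc k)) (hD : D RatFunc.X = 1)
    (P : k[X]) :
    D (algebraMap k[X] (RatFunc k) P) = algebraMap k[X] (RatFunc k) (derivative P) := by
  have : D.compAlgebraMap (A := k[X]) = Polynomial.mkDerivation k (1 : RatFunc k) := by
    apply Polynomial.derivation_ext
    simp [Derivation.compAlgebraMap, Polynomial.mkDerivation_X, RatFunc.algebraMap_X, hD]
  have h2 := DFunLike.congr_fun this P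
  simpa [Derivation.compAlgebraMap, Polynomial.mkDerivation_apply, Algebra.smul_def,
    mul_one] using h2

lemma phi_algebraMap (φ : RatFunc k →ₐ[k] RatFunc k) (hφ : φ RatFunc.X = RatFunc.X ^ 3)
    (P : k[X]) :
    φ (algebraMap k[X] (RatFunc k) P) = algebraMap k[X] (RatFunc k) (expand k 3 P) := by
  have : φ.comp (IsScalarTower.toAlgHom k k[X] (RatFunc k)) =
      (IsScalarTower.toAlgHom k k[X] (RatFunc k)).comp (expand k 3) := by
    apply Polynomial.algHom_ext
    simp [RatFunc.algebraMap_X, hφ, expand_X]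
  simpa using DFunLike.congr_fun this P

end Aux

section Aux2
variable {k : Type*} [Field k] [CharP k 3]
variable (D : Derivation k (RatFunc k) (RatFunc k)) (hD : D RatFunc.X = 1)
variable (φ : RatFunc k →ₐ[k] RatFunc k) (hφ : φ RatFunc.X = RatFunc.X ^ 3)

lemma deriv_expand_zero (P : k[X]) : derivative (expand k 3 P) = 0 := by
  have h3 : ((3 : ℕ) : k[X]) = 0 := CharP.cast_eq_zero k[X] 3
  rw [Polynomial.derivative_expand, h3, zero_mul, mul_zero]

include hD hφ in
lemma D_phi (f : RatFunc k) : D (φ f) = 0 := by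
  have hnum := RatFunc.num_div_denom f
  have hden : algebraMap k[X] (RatFunc k) f.denom ≠ 0 := by
    simpa using RatFunc.denom_ne_zero f
  have key : ∀ P : k[X], D (φ (algebraMap k[X] (RatFunc k) P)) = 0 := by
    intro P
    rw [phi_algebraMap φ hφ, D_algebraMap D hD, deriv_expand_zero, map_zero]
  have hfd : f * algebraMap k[X] (RatFunc k) f.denom = algebraMap k[X] (RatFunc k) f.num := by
    have := div_mul_cancel₀ (algebraMap k[X] (RatFunc k) f.num) hden
    rwa [hnum] at this
  have h1 : φ f * φ (algebraMap k[X] (RatFunc k) f.denom)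
      = φ (algebraMap k[X] (RatFunc k) f.num) := by
    rw [← map_mul, hfd]
  have h2 := congrArg D h1
  rw [Derivation.leibniz] at h2
  simp only [key, smul_eq_mul, mul_zero, zero_add, smul_zero] at h2
  have hφden : φ (algebraMap k[X] (RatFunc k) f.denom) ≠ 0 := fun hz =>
    hden (φ.toRingHom.injective (by simpa using hz))
  exact (mul_eq_zero.mp h2).resolve_left hφden

include hD hφ in
lemma kerD_sub (f : RatFunc k) (hf : D f = 0) : f ∈ Set.range φ := by
  rcases eq_or_ne f 0 with rfl | hf0
  · exact ⟨0, map_zero φ⟩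
  have hnum := RatFunc.num_div_denom f
  have hden : algebraMap k[X] (RatFunc k) f.denom ≠ 0 := by
    simpa using RatFunc.denom_ne_zero f
  have hinj := IsFractionRing.injective k[X] (RatFunc k)
  have hfd : f * algebraMap k[X] (RatFunc k) f.denom = algebraMap k[X] (RatFunc k) f.num := by
    have := div_mul_cancel₀ (algebraMap k[X] (RatFunc k) f.num) hden
    rwa [hnum] at this
  have h2 := congrArg D hfd.symm
  rw [D_algebraMap D hD, Derivation.leibniz, hf, smul_eq_mul, smul_eq_mul, mul_zero, add_zero,
    D_algebraMap D hD] at h2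
  -- h2 : algebraMap (derivative f.num) = f * algebraMap (derivative f.denom)
  have hwron : derivative f.num * f.denom = f.num * derivative f.denom := by
    apply hinj
    rw [map_mul, map_mul]
    linear_combination (algebraMap k[X] (RatFunc k) f.denom) * h2
      + (algebraMap k[X] (RatFunc k) (derivative f.denom)) * hfd
  have hdnum : derivative f.num = 0 := by
    rcases eq_or_ne f.num.natDegree 0 with h0 | h0
    · obtain ⟨a, ha⟩ := Polynomial.natDegree_eq_zero.mp h0
      rw [← ha, derivative_C]
    by_contra hne
    have hdvd : f.num ∣ derivative f.num := by
      refine (RatFunc.isCoprime_num_denom f).dvd_of_dvd_mul_right ?_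
      exact ⟨derivative f.denom, by linear_combination hwron⟩
    have hle := Polynomial.natDegree_le_of_dvd hdvd hne
    exact absurd hle (not_le.mpr (Polynomial.natDegree_derivative_lt h0))
  have hdden : derivative f.denom = 0 := by
    rw [hdnum, zero_mul] at hwron
    exact (mul_eq_zero.mp hwron.symm).resolve_left (RatFunc.num_ne_zero hf0)
  obtain hP := Polynomial.expand_contract 3 hdnum (by norm_num)
  obtain hQ := Polynomial.expand_contract 3 hdden (by norm_num)
  refine ⟨algebraMap k[X] (RatFunc k) (Polynomial.contract 3 f.num)
    / algebraMap k[X] (RatFunc k) (Polynomial.contract 3 f.denom), ?_⟩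
  rw [map_div₀, phi_algebraMap φ hφ, phi_algebraMap φ hφ, hP, hQ, hnum]

include hD in
lemma D_three (f : RatFunc k) : D (D (D f)) = 0 := by
  have h3 : (3 : RatFunc k) = 0 := three_eq_zero'
  have leib3 : ∀ a b : RatFunc k, D (D (D (a * b)))
      = a * D (D (D b)) + b * D (D (D a))
        + 3 * (D a * D (D b) + D (D a) * D b) := by
    intro a b
    simp only [Derivation.leibniz, smul_eq_mul, map_add]
    ring
  have key : ∀ P : k[X], D (D (D (algebraMap k[X] (RatFunc k) P))) = 0 := by
    intro P
    induction P using Polynomial.induction_on with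
    | C a => simp [RatFunc.algebraMap_C, ← RatFunc.algebraMap_eq_C]
    | add p q hp hq => simp [map_add, hp, hq]
    | monomial n a ih =>
        have : (Polynomial.C a * Polynomial.X ^ (n + 1) : k[X])
            = (Polynomial.C a * Polynomial.X ^ n) * Polynomial.X := by ring
        rw [this, map_mul, leib3, ih, RatFunc.algebraMap_X]
        have hX3 : D (D (D RatFunc.X)) = 0 := by rw [hD]; simp
        rw [hX3, hD, h3]
        simp
  have hnum := RatFunc.num_div_denom f
  have hden : algebraMap k[X] (RatFunc k) f.denom ≠ 0 := by
    simpa using RatFunc.denom_ne_zero f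
  have hfd : f * algebraMap k[X] (RatFunc k) f.denom = algebraMap k[X] (RatFunc k) f.num := by
    have := div_mul_cancel₀ (algebraMap k[X] (RatFunc k) f.num) hden
    rwa [hnum] at this
  have h2 := congrArg (fun z => D (D (D z))) hfd
  rw [leib3, key, key, h3] at h2
  simp only [mul_zero, zero_mul, add_zero, zero_add] at h2
  exact (mul_eq_zero.mp h2).resolve_left hden
end Aux2

/-- In characteristic 3, for nonzero `g, h ∈ k(x)` that are not `k(x³)`-multiples of
one another, `T_g(q) = T_h(r)` (where `T_f(q) = q·f′ − f·q′`) holds iff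
`q = β·h + γ·g` and `r = −β·g + δ·h` for some `β, γ, δ ∈ k(x³)`.  Here `k(x³)` is the
range of the `k`-algebra endomorphism of `k(x)` sending `x` to `x³`, and the
derivative `′` is the unique `k`-derivation `D` on `k(x)` with `D x = 1`. -/
theorem char_three_Tg_eq_Th_iff
    (k : Type*) [Field k] [IsAlgClosed k] [CharP k 3]
    (φ : RatFunc k →ₐ[k] RatFunc k) (hφ : φ RatFunc.X = RatFunc.X ^ 3)
    (D : Derivation k (RatFunc k) (RatFunc k)) (hD : D RatFunc.X = 1)
    (g h : RatFunc k) (hg : g ≠ 0) (hh : h ≠ 0)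
    (hprop : ¬ ∃ β ∈ Set.range φ, g = β * h) (q r : RatFunc k) :
    q * D g - g * D q = r * D h - h * D r ↔
      ∃ β ∈ Set.range φ, ∃ γ ∈ Set.range φ, ∃ δ ∈ Set.range φ,
        q = β * h + γ * g ∧ r = -(β * g) + δ * h := by
  have h3 : (3 : RatFunc k) = 0 := three_eq_zero'
  constructor
  · intro heq
    set u : RatFunc k := q / g with hu_def
    set v : RatFunc k := r / h with hv_def
    set t : RatFunc k := h / g with ht_def
    have ht0 : t ≠ 0 := div_ne_zero hh hg
    have hq : u * g = q := div_mul_cancel₀ q hg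
    have hr : v * h = r := div_mul_cancel₀ r hh
    have hh' : t * g = h := div_mul_cancel₀ h hg
    -- rewrite heq in terms of u, v
    rw [← hq, ← hr] at heq
    rw [Derivation.leibniz, Derivation.leibniz] at heq
    simp only [smul_eq_mul] at heq
    -- heq : u*g*Dg - g*(u*Dg + g*Du) = v*h*Dh - h*(v*Dh + h*Dv)
    have e1 : g ^ 2 * D u = h ^ 2 * D v := by linear_combination -heq
    have et : D u = t * (t * D v) := by
      rw [ht_def]
      field_simp
      linear_combination e1
    -- Dt ≠ 0
    have hDt : D t ≠ 0 := by
      intro hDt0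
      obtain ⟨w, hw⟩ := kerD_sub D hD φ hφ t hDt0
      have hw0 : w ≠ 0 := by rintro rfl; rw [map_zero] at hw; exact ht0 hw.symm
      refine hprop ⟨φ w⁻¹, ⟨w⁻¹, rfl⟩, ?_⟩
      rw [map_inv₀, hw, ht_def, inv_div]
      rw [div_mul_cancel₀ g hh]
    have e2 := congrArg D et
    rw [Derivation.leibniz, Derivation.leibniz] at e2
    simp only [smul_eq_mul] at e2
    have e3 := congrArg D e2
    simp only [map_add, Derivation.leibniz, smul_eq_mul, D_three D hD] at e3
    -- Wronskian is zero
    have W : D (D u) * D t - D u * D (D t) = 0 := by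
      linear_combination (D t) * e2 - (D (D t)) * et - t * e3 - (t^2 * D (D t) * D v) * h3 - (D t * h^2 * g⁻¹^2 * D (D v)) * h3
    set β : RatFunc k := D u / D t with hβ_def
    have hβt : β * D t = D u := div_mul_cancel₀ _ hDt
    have hβker : D β = 0 := by
      rw [hβ_def, Derivation.leibniz_div]
      simp only [smul_eq_mul]
      rw [show D t * D (D u) - D u * D (D t) = 0 by linear_combination W]
      simp
    set γ : RatFunc k := u - β * t with hγ_def
    have hγker : D γ = 0 := by
      rw [hγ_def, map_sub, Derivation.leibniz]
      simp only [smul_eq_mul, hβker, mul_zero, add_zero]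
      linear_combination -hβt
    set δ : RatFunc k := v + β / t with hδ_def
    have hδker : D δ = 0 := by
      have hx := D.leibniz_div β t
      rw [hδ_def, map_add, hx]
      simp only [smul_eq_mul, hβker, mul_zero, zero_sub]
      rw [hβt, et]
      field_simp
      ring
    refine ⟨β, kerD_sub D hD φ hφ β hβker, γ, kerD_sub D hD φ hφ γ hγker,
      δ, kerD_sub D hD φ hφ δ hδker, ?_, ?_⟩
    · rw [hγ_def]
      field_simp [hu_def, ht_def]
      rw [← hq, ← hh']; ring
    · rw [hδ_def]
      field_simp [hv_def, ht_def]
      rw [← hr, ← hh']; ring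
  · rintro ⟨β, ⟨b, rfl⟩, γ, ⟨c, rfl⟩, δ, ⟨d, rfl⟩, rfl, rfl⟩
    have hb := D_phi D hD φ hφ b
    have hc := D_phi D hD φ hφ c
    have hd := D_phi D hD φ hφ d
    simp only [map_add, map_neg, Derivation.leibniz, smul_eq_mul, hb, hc, hd,
      mul_zero, zero_add, add_zero]
    ring
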